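/- arXiv:2305.01327 — 7 statements merged into one kernel-verified Lean document; each statement's English description precedes it below -/
import Mathlib

section
/- Let f : 𝔹^n → 𝔹^n have non-autoregulated variable n, let 𝒮(x) = (x, f_n(x,0)), and let the reduced network be f̃ = (f_1∘𝒮, …, f_{n-1}∘𝒮) : 𝔹^{n-1} → 𝔹^{n-1}. Then every asynchronous transition of f̃ from x to x̄^i corresponds to an asynchronous transition of f from 𝒮(x) to the state obtained from 𝒮(x) by flipping coordinate i. -/
/-- Asynchronous transition: flip one coordinate i where f disagrees with x. -/
def step {n : ℕ} (f : (Fin n → Bool) → Fin n → Bool) (x y : Fin n → Bool) : Prop :=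
  ∃ i : Fin n, f x i ≠ x i ∧ y = Function.update x i (!x i)

/-- Reachability: reflexive-transitive closure of the asynchronous step relation. -/
def reaches {n : ℕ} (f : (Fin n → Bool) → Fin n → Bool) :
    (Fin n → Bool) → (Fin n → Bool) → Prop :=
  Relation.ReflTransGen (step f)

/-- Trap set: no outgoing asynchronous transition. -/
def IsTrap {n : ℕ} (f : (Fin n → Bool) → Fin n → Bool) (B : Set (Fin n → Bool)) : Prop :=
  ∀ x ∈ B, ∀ y, step f x y → y ∈ B

/-- Attractor: inclusion-minimal nonempty trap set. -/
def IsAttractor {n : ℕ} (f : (Fin n → Bool) → Fin n → Bool) (A : Set (Fin n → Bool)) : Prop :=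
  A.Nonempty ∧ IsTrap f A ∧ ∀ B ⊆ A, B.Nonempty → IsTrap f B → B = A

/-- Subspace: the set of states fixing some coordinates to given constants. -/
def IsSubspace {n : ℕ} (T : Set (Fin n → Bool)) : Prop :=
  ∃ (I : Set (Fin n)) (v : Fin n → Bool), T = {x | ∀ i ∈ I, x i = v i}

/-- Trap space: a subspace that is a trap set. -/
def IsTrapSpace {n : ℕ} (f : (Fin n → Bool) → Fin n → Bool) (T : Set (Fin n → Bool)) : Prop :=
  IsSubspace T ∧ IsTrap f T

/-- Minimal trap space: nonempty trap space minimal under inclusion. -/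
def IsMinTrapSpace {n : ℕ} (f : (Fin n → Bool) → Fin n → Bool) (T : Set (Fin n → Bool)) : Prop :=
  T.Nonempty ∧ IsTrapSpace f T ∧
    ∀ T' ⊆ T, T'.Nonempty → IsTrapSpace f T' → T' = T

/-- The lifting map 𝒮(x) = (x, f_n(x,0)). -/
def liftS {n : ℕ} (f : (Fin (n+1) → Bool) → Fin (n+1) → Bool) (x : Fin n → Bool) :
    Fin (n+1) → Bool :=
  Fin.snoc x (f (Fin.snoc x false) (Fin.last n))

/-- Reduction by elimination of the (non-autoregulated) last variable:
f̃_i(x) = f_i(𝒮(x)). -/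
def reduced {n : ℕ} (f : (Fin (n+1) → Bool) → Fin (n+1) → Bool)
    (x : Fin n → Bool) (i : Fin n) : Bool :=
  f (liftS f x) i.castSucc

/-- Projection π onto the first n coordinates. -/
def proj {n : ℕ} (y : Fin (n+1) → Bool) : Fin n → Bool := Fin.init y

theorem stmt2 {n : ℕ} (f : (Fin (n+1) → Bool) → Fin (n+1) → Bool)
    (hna : ∀ (x : Fin n → Bool) (a b : Bool),
      f (Fin.snoc x a) (Fin.last n) = f (Fin.snoc x b) (Fin.last n))
    (x : Fin n → Bool) (i : Fin n)
    (h : step (reduced f) x (Function.update x i (!x i))) :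
    step f (liftS f x)
      (Function.update (liftS f x) i.castSucc (!(liftS f x) i.castSucc)) := by
  obtain ⟨j, hj, heq⟩ := h
  have hji : j = i := by
    by_contra hne
    have := congrFun heq i
    simp [Function.update_self, Function.update_of_ne (Ne.symm hne)] at this
  subst hji
  refine ⟨j.castSucc, ?_, rfl⟩
  have hx : liftS f x j.castSucc = x j := by simp [liftS, Fin.snoc_castSucc]
  rw [hx]
  exact hj
end

section
/- Let f : 𝔹^n → 𝔹^n have non-autoregulated variable n and let f̃ be the reduction obtained by eliminating variable n. If B ⊆ 𝔹^n is a trap set for the asynchronous dynamics of f, then π(B) ⊆ 𝔹^{n-1} is a trap set for the asynchronous dynamics of f̃, where π is the projection onto the first n−1 coordinates. -/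
theorem stmt3 {n : ℕ} (f : (Fin (n+1) → Bool) → Fin (n+1) → Bool)
    (hna : ∀ (x : Fin n → Bool) (a b : Bool),
      f (Fin.snoc x a) (Fin.last n) = f (Fin.snoc x b) (Fin.last n))
    (B : Set (Fin (n+1) → Bool)) (hB : IsTrap f B) :
    IsTrap (reduced f) (proj '' B) := by
  rintro x ⟨z, hzB, rfl⟩ y ⟨i, hfi, rfl⟩
  set c := f (Fin.snoc (proj z) false) (Fin.last n) with hc
  have hz' : Fin.snoc (proj z) (z (Fin.last n)) = z := Fin.snoc_init_self z
  have hlift : liftS f (proj z) ∈ B := by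
    by_cases h : z (Fin.last n) = c
    · have : liftS f (proj z) = z := by rw [liftS, ← hc, ← h, hz']
      rwa [this]
    · refine hB z hzB _ ⟨Fin.last n, ?_, ?_⟩
      · have : f z (Fin.last n) = c := by rw [← hz', hna _ _ false]
        rw [this]; exact fun hcz => h hcz.symm
      · have hcb : c = !z (Fin.last n) := Bool.eq_not_iff.mpr (fun e => h e.symm)
        rw [liftS, ← hc, hcb]
        funext j
        rcases Fin.eq_castSucc_or_eq_last j with ⟨k, rfl⟩ | rfl
        · rw [Fin.snoc_castSucc, Function.update_of_ne (Fin.castSucc_lt_last k).ne]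
          rfl
        · rw [Fin.snoc_last, Function.update_self]
  have hstep : Function.update (liftS f (proj z)) i.castSucc (!(proj z i)) ∈ B := by
    refine hB _ hlift _ ⟨i.castSucc, ?_, ?_⟩
    · have : liftS f (proj z) i.castSucc = proj z i := by
        rw [liftS, ← hc, Fin.snoc_castSucc]
      rw [this]; exact hfi
    · rw [liftS, ← hc, Fin.snoc_castSucc]
  refine ⟨_, hstep, ?_⟩
  funext j
  by_cases hji : j = i
  · subst hji
    simp [proj, Fin.init, Function.update_self]
  · have : (j.castSucc : Fin (n+1)) ≠ i.castSucc := by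
      simpa [Fin.castSucc_inj] using hji
    simp [proj, Fin.init, Function.update_of_ne this, Function.update_of_ne hji,
      liftS, ← hc, Fin.snoc_castSucc]
end

section
/- Let f : 𝔹^n → 𝔹^n have non-autoregulated variable n with reduction f̃ : 𝔹^{n-1} → 𝔹^{n-1}. If 𝒜 is an attractor of the asynchronous dynamics of f, then π(𝒜) contains at least one attractor of the asynchronous dynamics of f̃. -/
lemma exists_attractor_in {n : ℕ} (f : (Fin n → Bool) → Fin n → Bool) :
    ∀ (k : ℕ) (S : Set (Fin n → Bool)), S.ncard = k → S.Nonempty → IsTrap f S →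
      ∃ A ⊆ S, IsAttractor f A := by
  intro k
  induction k using Nat.strong_induction_on with
  | _ k ih =>
    intro S hk hne ht
    by_cases h : ∀ B ⊆ S, B.Nonempty → IsTrap f B → B = S
    · exact ⟨S, le_refl _, hne, ht, h⟩
    · push_neg at h
      obtain ⟨B, hBS, hBne, hBt, hBne'⟩ := h
      have hlt : B.ncard < k := by
        rw [← hk]
        exact Set.ncard_lt_ncard (lt_of_le_of_ne hBS hBne') (Set.toFinite S)
      obtain ⟨A, hAB, hAatt⟩ := ih _ hlt B rfl hBne hBt
      exact ⟨A, hAB.trans hBS, hAatt⟩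

theorem stmt4 {n : ℕ} (f : (Fin (n+1) → Bool) → Fin (n+1) → Bool)
    (hna : ∀ (x : Fin n → Bool) (a b : Bool),
      f (Fin.snoc x a) (Fin.last n) = f (Fin.snoc x b) (Fin.last n))
    (A : Set (Fin (n+1) → Bool)) (hA : IsAttractor f A) :
    ∃ A' : Set (Fin n → Bool), IsAttractor (reduced f) A' ∧ A' ⊆ proj '' A := by
  obtain ⟨hne, htrap, _⟩ := hA
  -- liftS of any projected point is in A
  have hlift : ∀ x ∈ proj '' A, liftS f x ∈ A := by
    rintro x ⟨y, hyA, rfl⟩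
    obtain ⟨x, b, rfl⟩ : ∃ x b, y = Fin.snoc x b :=
      ⟨Fin.init y, y (Fin.last n), (Fin.snoc_init_self y).symm⟩
    have hproj : proj (Fin.snoc x b) = x := Fin.init_snoc _ _
    rw [hproj]
    by_cases hc : b = f (Fin.snoc x false) (Fin.last n)
    · have : liftS f x = Fin.snoc x b := by rw [liftS, ← hc]
      rwa [this]
    · refine htrap _ hyA _ ⟨Fin.last n, ?_, ?_⟩
      · rw [Fin.snoc_last, hna x b false]
        exact fun h => hc h.symm
      · rw [Fin.update_snoc_last, Fin.snoc_last, liftS]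
        have hb : f (Fin.snoc x false) (Fin.last n) = !b := by
          cases hb2 : f (Fin.snoc x false) (Fin.last n) <;> cases b <;>
            first | rfl | exact absurd hb2.symm hc
        rw [hb]
  have hSne : (proj '' A).Nonempty := hne.image _
  have hStrap : IsTrap (reduced f) (proj '' A) := by
    intro x hx y hstep
    obtain ⟨i, hi, rfl⟩ := hstep
    have hin : liftS f x ∈ A := hlift x hx
    have hstep' : step f (liftS f x) (Function.update (liftS f x) i.castSucc (!x i)) := by
      have hx : liftS f x i.castSucc = x i := Fin.snoc_castSucc _ _ _
      exact ⟨i.castSucc, by rw [hx]; exact hi, by rw [hx]⟩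
    have hmem : Function.update (liftS f x) i.castSucc (!x i) ∈ A := htrap _ hin _ hstep'
    refine ⟨_, hmem, ?_⟩
    rw [liftS, ← Fin.snoc_update, proj]
    exact Fin.init_snoc _ _
  obtain ⟨A', hsub, hatt⟩ := exists_attractor_in (reduced f) _ (proj '' A) rfl hSne hStrap
  exact ⟨A', hatt, hsub⟩
end

section
/- Let f : 𝔹^n → 𝔹^n have non-autoregulated variable n, reduction f̃, and lifting map 𝒮(x) = (x, f_n(x,0)). If 𝒜 is an attractor of Γ(f) and x ∈ π(𝒜) lies in an attractor of Γ(f̃), then 𝒮(x) ∈ 𝒜. -/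
theorem stmt5 {n : ℕ} (f : (Fin (n+1) → Bool) → Fin (n+1) → Bool)
    (hna : ∀ (x : Fin n → Bool) (a b : Bool),
      f (Fin.snoc x a) (Fin.last n) = f (Fin.snoc x b) (Fin.last n))
    (A : Set (Fin (n+1) → Bool)) (hA : IsAttractor f A)
    (x : Fin n → Bool) (hx : x ∈ proj '' A)
    (hx' : ∃ A' : Set (Fin n → Bool), IsAttractor (reduced f) A' ∧ x ∈ A') :
    liftS f x ∈ A := by
  obtain ⟨y, hyA, hyx⟩ := hx
  have hy : y = Fin.snoc x (y (Fin.last n)) := by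
    rw [← hyx]; simp [proj, Fin.snoc_init_self]
  set b := f (Fin.snoc x false) (Fin.last n) with hb
  by_cases hcase : y (Fin.last n) = b
  · have : liftS f x = y := by
      rw [liftS, ← hb, ← hcase, ← hy]
    rwa [this]
  · have hstep : step f y (liftS f x) := by
      refine ⟨Fin.last n, ?_, ?_⟩
      · have : f y (Fin.last n) = b := by
          rw [hy]; exact hna x _ false
        rw [this]; exact fun h => hcase h.symm
      · have hnb : (!(y (Fin.last n))) = b := by
          have h := hcase
          cases h1 : y (Fin.last n) <;> cases h2 : b <;>
            simp [h1, h2] at h ⊢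
        funext i
        refine Fin.lastCases ?_ (fun j => ?_) i
        · rw [Function.update_self, liftS, Fin.snoc_last, ← hb, ← hnb]
        · have hne : j.castSucc ≠ Fin.last n := (Fin.castSucc_lt_last j).ne
          rw [Function.update_of_ne hne, liftS, Fin.snoc_castSucc]
          have h2 := congrFun hy j.castSucc
          rw [Fin.snoc_castSucc] at h2
          exact h2.symm
    exact hA.2.1 y hyA _ hstep
end

section
/- Let f : 𝔹^n → 𝔹^n have non-autoregulated variable n with reduction f̃ : 𝔹^{n-1} → 𝔹^{n-1} and lifting 𝒮(x) = (x, f_n(x,0)). Then y is a fixed point of f if and only if y = 𝒮(x) for some fixed point x of f̃; consequently 𝒮 restricts to a bijection between the fixed points of f̃ and the fixed points of f. -/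
theorem stmt6 {n : ℕ} (f : (Fin (n+1) → Bool) → Fin (n+1) → Bool)
    (hna : ∀ (x : Fin n → Bool) (a b : Bool),
      f (Fin.snoc x a) (Fin.last n) = f (Fin.snoc x b) (Fin.last n)) :
    (∀ y : Fin (n+1) → Bool,
      f y = y ↔ ∃ x : Fin n → Bool, reduced f x = x ∧ y = liftS f x) ∧
    Set.BijOn (liftS f) {x | reduced f x = x} {y | f y = y} := by

  have key : ∀ y : Fin (n+1) → Bool,
      f y = y ↔ ∃ x : Fin n → Bool, reduced f x = x ∧ y = liftS f x := by
    intro y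
    constructor
    · intro hy
      refine ⟨Fin.init y, ?_, ?_⟩
      · have hlift : liftS f (Fin.init y) = y := by
          unfold liftS
          rw [hna (Fin.init y) false (y (Fin.last n)), Fin.snoc_init_self,
            show f y (Fin.last n) = y (Fin.last n) from congrFun hy _,
            Fin.snoc_init_self]
        funext i
        unfold reduced
        rw [hlift]
        exact congrFun hy _
      · unfold liftS
        rw [hna (Fin.init y) false (y (Fin.last n)), Fin.snoc_init_self,
          show f y (Fin.last n) = y (Fin.last n) from congrFun hy _,
          Fin.snoc_init_self]
    · rintro ⟨x, hx, rfl⟩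
      funext i
      refine Fin.lastCases ?_ ?_ i
      · show f (liftS f x) (Fin.last n) = liftS f x (Fin.last n)
        unfold liftS
        rw [Fin.snoc_last]
        exact hna x _ false
      · intro i
        show f (liftS f x) i.castSucc = liftS f x i.castSucc
        have := congrFun hx i
        unfold reduced at this
        rw [this]
        unfold liftS
        rw [Fin.snoc_castSucc]
  refine ⟨key, ?_, ?_, ?_⟩
  · intro x hx
    exact (key (liftS f x)).2 ⟨x, hx, rfl⟩
  · intro x _ x' _ h
    have : Fin.init (liftS f x) = Fin.init (liftS f x') := by rw [h]
    simpa [liftS, Fin.init_snoc] using this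
  · intro y hy
    obtain ⟨x, hx, hxy⟩ := (key y).1 hy
    exact ⟨x, hx, hxy.symm⟩
end

section
/- Let f : 𝔹^n → 𝔹^n have non-autoregulated variable n with reduction f̃. Then the number of attractors of the asynchronous dynamics of f̃ is greater than or equal to the number of attractors of the asynchronous dynamics of f; concretely, the map sending each attractor 𝒜 of f to the set of attractors of f̃ contained in π(𝒜) assigns to distinct attractors of f disjoint nonempty sets of attractors of f̃. -/
section Aux
variable {n : ℕ}

lemma attractor_eq_of_inter (f : (Fin n → Bool) → Fin n → Bool) {A B : Set (Fin n → Bool)}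
    (hA : IsAttractor f A) (hB : IsAttractor f B) {x} (hxA : x ∈ A) (hxB : x ∈ B) : A = B := by
  have hI : IsTrap f (A ∩ B) := fun z hz y hy => ⟨hA.2.1 z hz.1 y hy, hB.2.1 z hz.2 y hy⟩
  have hne' : (A ∩ B).Nonempty := ⟨x, hxA, hxB⟩
  have h1 := hA.2.2 (A ∩ B) Set.inter_subset_left hne' hI
  have h2 := hB.2.2 (A ∩ B) Set.inter_subset_right hne' hI
  rw [← h1, h2]

lemma exists_attractor_subset (f : (Fin n → Bool) → Fin n → Bool) {B : Set (Fin n → Bool)}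
    (hB : B.Nonempty) (hT : IsTrap f B) : ∃ A, A ⊆ B ∧ IsAttractor f A := by
  obtain ⟨C, hCS, hmin⟩ := exists_minimal_of_wellFoundedLT
    (fun C => C ⊆ B ∧ C.Nonempty ∧ IsTrap f C) ⟨B, le_refl _, hB, hT⟩
  exact ⟨C, hCS.1, hCS.2.1, hCS.2.2, fun D hD hDne hDT =>
    le_antisymm hD (hmin ⟨hD.trans hCS.1, hDne, hDT⟩ hD)⟩

lemma liftS_mem (f : (Fin (n+1) → Bool) → Fin (n+1) → Bool)
    (hna : ∀ (x : Fin n → Bool) (a b : Bool),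
      f (Fin.snoc x a) (Fin.last n) = f (Fin.snoc x b) (Fin.last n))
    {A : Set (Fin (n+1) → Bool)} (hT : IsTrap f A) {x : Fin n → Bool} {a : Bool}
    (h : Fin.snoc x a ∈ A) : liftS f x ∈ A := by
  by_cases hac : a = f (Fin.snoc x false) (Fin.last n)
  · rw [liftS, ← hac]; exact h
  · have hf : f (Fin.snoc x a) (Fin.last n) = f (Fin.snoc x false) (Fin.last n) := hna x a false
    have hstep : step f (Fin.snoc x a) (liftS f x) := by
      refine ⟨Fin.last n, ?_, ?_⟩
      · rw [hf, Fin.snoc_last]; exact fun h' => hac h'.symm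
      · rw [Fin.snoc_last, Fin.update_snoc_last, liftS]
        revert hac; cases a <;> cases (f (Fin.snoc x false) (Fin.last n)) <;> simp
    exact hT _ h _ hstep

lemma liftS_step (f : (Fin (n+1) → Bool) → Fin (n+1) → Bool)
    (hna : ∀ (x : Fin n → Bool) (a b : Bool),
      f (Fin.snoc x a) (Fin.last n) = f (Fin.snoc x b) (Fin.last n))
    {A : Set (Fin (n+1) → Bool)} (hT : IsTrap f A) {x y : Fin n → Bool}
    (hs : step (reduced f) x y) (hx : liftS f x ∈ A) : liftS f y ∈ A := by
  obtain ⟨i, hi, hy⟩ := hs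
  have hstep : step f (liftS f x) (Fin.snoc y (f (Fin.snoc x false) (Fin.last n))) := by
    refine ⟨i.castSucc, ?_, ?_⟩
    · show f (liftS f x) i.castSucc ≠ liftS f x i.castSucc
      rw [liftS, Fin.snoc_castSucc]
      exact hi
    · rw [liftS, Fin.snoc_castSucc, hy, Fin.snoc_update]
  have hmem := hT _ hx _ hstep
  exact liftS_mem f hna hT hmem

lemma proj_trap (f : (Fin (n+1) → Bool) → Fin (n+1) → Bool)
    (hna : ∀ (x : Fin n → Bool) (a b : Bool),
      f (Fin.snoc x a) (Fin.last n) = f (Fin.snoc x b) (Fin.last n))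
    {A : Set (Fin (n+1) → Bool)} (hT : IsTrap f A) : IsTrap (reduced f) (proj '' A) := by
  rintro x ⟨z, hz, rfl⟩ y hs
  have hz' : Fin.snoc (proj z) (z (Fin.last n)) ∈ A := by
    rw [show Fin.snoc (proj z) (z (Fin.last n)) = z from funext fun i => by
      rw [proj]; exact congrFun (Fin.snoc_init_self z) i]
    exact hz
  have hx := liftS_mem f hna hT hz'
  have hy := liftS_step f hna hT hs hx
  exact ⟨liftS f y, hy, by rw [proj, liftS, Fin.init_snoc]⟩

lemma mem_lift_of_sub (f : (Fin (n+1) → Bool) → Fin (n+1) → Bool)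
    (hna : ∀ (x : Fin n → Bool) (a b : Bool),
      f (Fin.snoc x a) (Fin.last n) = f (Fin.snoc x b) (Fin.last n))
    {A : Set (Fin (n+1) → Bool)} (hT : IsTrap f A) {x : Fin n → Bool}
    (hx : x ∈ proj '' A) : liftS f x ∈ A := by
  obtain ⟨z, hz, rfl⟩ := hx
  have hz' : Fin.snoc (proj z) (z (Fin.last n)) ∈ A := by
    rw [show Fin.snoc (proj z) (z (Fin.last n)) = z from funext fun i => by
      rw [proj]; exact congrFun (Fin.snoc_init_self z) i]
    exact hz
  exact liftS_mem f hna hT hz'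


end Aux

theorem stmt7 {n : ℕ} (f : (Fin (n+1) → Bool) → Fin (n+1) → Bool)
    (hna : ∀ (x : Fin n → Bool) (a b : Bool),
      f (Fin.snoc x a) (Fin.last n) = f (Fin.snoc x b) (Fin.last n)) :
    {A | IsAttractor f A}.ncard ≤ {A | IsAttractor (reduced f) A}.ncard ∧
    ∀ A B : Set (Fin (n+1) → Bool), IsAttractor f A → IsAttractor f B → A ≠ B →
      {A' | IsAttractor (reduced f) A' ∧ A' ⊆ proj '' A}.Nonempty ∧
      Disjoint {A' | IsAttractor (reduced f) A' ∧ A' ⊆ proj '' A}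
        {A' | IsAttractor (reduced f) A' ∧ A' ⊆ proj '' B} := by
  have key : ∀ A : Set (Fin (n+1) → Bool), IsAttractor f A →
      {A' | IsAttractor (reduced f) A' ∧ A' ⊆ proj '' A}.Nonempty := by
    intro A hA
    have hne : (proj '' A).Nonempty := hA.1.image _
    obtain ⟨A', hsub, hatt⟩ := exists_attractor_subset (reduced f) hne (proj_trap f hna hA.2.1)
    exact ⟨A', hatt, hsub⟩
  have disj : ∀ A B : Set (Fin (n+1) → Bool), IsAttractor f A → IsAttractor f B → A ≠ B →
      Disjoint {A' | IsAttractor (reduced f) A' ∧ A' ⊆ proj '' A}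
        {A' | IsAttractor (reduced f) A' ∧ A' ⊆ proj '' B} := by
    intro A B hA hB hAB
    rw [Set.disjoint_left]
    rintro A' ⟨hatt, hsubA⟩ ⟨-, hsubB⟩
    obtain ⟨x, hx⟩ := hatt.1
    exact hAB (attractor_eq_of_inter f hA hB
      (mem_lift_of_sub f hna hA.2.1 (hsubA hx))
      (mem_lift_of_sub f hna hB.2.1 (hsubB hx)))
  refine ⟨?_, fun A B hA hB hAB => ⟨key A hA, disj A B hA hB hAB⟩⟩
  classical
  set g : Set (Fin (n+1) → Bool) → Set (Fin n → Bool) := fun A =>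
    if h : IsAttractor f A then (key A h).choose else ∅ with hg
  have hgmem : ∀ A, (h : IsAttractor f A) →
      IsAttractor (reduced f) (g A) ∧ g A ⊆ proj '' A := by
    intro A h
    have := (key A h).choose_spec
    rw [hg]; simp only [dif_pos h]; exact this
  refine Set.ncard_le_ncard_of_injOn g (fun A hA => (hgmem A hA).1) ?_ (Set.toFinite _)
  intro A hA B hB hgeq
  by_contra hAB
  have h1 := hgmem A hA
  have h2 := hgmem B hB
  have hd := disj A B hA hB hAB
  rw [Set.disjoint_left] at hd
  have hd2 := hd (a := g A) ⟨h1.1, h1.2⟩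
  rw [hgeq] at hd2
  exact hd2 ⟨h2.1, h2.2⟩
end

section
/- Eliminating a non-autoregulated variable can strictly increase the number of asynchronous attractors: the Boolean network ĥ(x₁,x₂,x₃) = (x₁¬x₃ ∨ x₂¬x₃, x₁¬x₃ ∨ x₂¬x₃, x₁x₂) on 𝔹³ has a unique attractor (the fixed point 000), while its reduction by elimination of the non-autoregulated variable x₃, namely h(x₁,x₂) = (x₁¬x₂ ∨ ¬x₁x₂, x₁¬x₂ ∨ ¬x₁x₂), has two attractors. -/
/-- ĥ(x₁,x₂,x₃) = (x₁¬x₃ ∨ x₂¬x₃, x₁¬x₃ ∨ x₂¬x₃, x₁x₂). -/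
def hhat (x : Fin 3 → Bool) : Fin 3 → Bool :=
  ![(x 0 && !x 2) || (x 1 && !x 2), (x 0 && !x 2) || (x 1 && !x 2), x 0 && x 1]

/-- h(x₁,x₂) = (x₁¬x₂ ∨ ¬x₁x₂, x₁¬x₂ ∨ ¬x₁x₂). -/
def h17 (x : Fin 2 → Bool) : Fin 2 → Bool :=
  ![(x 0 && !x 1) || (!x 0 && x 1), (x 0 && !x 1) || (!x 0 && x 1)]


instance {n : ℕ} (f : (Fin n → Bool) → Fin n → Bool) (x y : Fin n → Bool) :
    Decidable (step f x y) :=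
  decidable_of_iff (∃ i, f x i ≠ x i ∧ y = Function.update x i (!x i)) Iff.rfl

lemma trap_closed {n : ℕ} {f : (Fin n → Bool) → Fin n → Bool} {A : Set (Fin n → Bool)}
    (hA : IsTrap f A) {x y : Fin n → Bool} (hx : x ∈ A) (h : reaches f x y) : y ∈ A := by
  induction h with
  | refl => exact hx
  | tail _ hstep ih => exact hA _ ih _ hstep

lemma singleton_attractor {n : ℕ} {f : (Fin n → Bool) → Fin n → Bool} {x : Fin n → Bool}
    (hfix : f x = x) : IsAttractor f {x} := by
  refine ⟨⟨x, rfl⟩, ?_, ?_⟩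
  · intro a ha y hy
    rw [Set.mem_singleton_iff] at ha; subst ha
    obtain ⟨i, hi, _⟩ := hy
    exact absurd (congrFun hfix i) hi
  · intro B hBsub hBne _
    rcases Set.subset_singleton_iff_eq.mp hBsub with h | h
    · exact absurd h hBne.ne_empty
    · exact h

lemma eta3 (x : Fin 3 → Bool) : x = ![x 0, x 1, x 2] := by
  funext i; fin_cases i <;> rfl

lemma eta2 (x : Fin 2 → Bool) : x = ![x 0, x 1] := by
  funext i; fin_cases i <;> rfl

-- all states of hhat reach 000
lemma reach3 (x : Fin 3 → Bool) : reaches hhat x (fun _ => false) := by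
  have hz : (fun _ => false : Fin 3 → Bool) = ![false, false, false] := by decide
  have r001 : reaches hhat ![false,false,true] (fun _ => false) := by
    rw [hz]; exact Relation.ReflTransGen.single (by decide)
  have r011 : reaches hhat ![false,true,true] (fun _ => false) :=
    Relation.ReflTransGen.head (show step hhat _ ![false,false,true] by decide) r001
  have r111 : reaches hhat ![true,true,true] (fun _ => false) :=
    Relation.ReflTransGen.head (show step hhat _ ![false,true,true] by decide) r011
  have r110 : reaches hhat ![true,true,false] (fun _ => false) :=
    Relation.ReflTransGen.head (show step hhat _ ![true,true,true] by decide) r111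
  have r100 : reaches hhat ![true,false,false] (fun _ => false) :=
    Relation.ReflTransGen.head (show step hhat _ ![true,true,false] by decide) r110
  have r010 : reaches hhat ![false,true,false] (fun _ => false) :=
    Relation.ReflTransGen.head (show step hhat _ ![true,true,false] by decide) r110
  have r101 : reaches hhat ![true,false,true] (fun _ => false) :=
    Relation.ReflTransGen.head (show step hhat _ ![false,false,true] by decide) r001
  rw [eta3 x]
  rcases Bool.dichotomy (x 0) with h0 | h0 <;> rcases Bool.dichotomy (x 1) with h1 | h1 <;>
    rcases Bool.dichotomy (x 2) with h2 | h2 <;> rw [h0, h1, h2]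
  · rw [← hz]; exact Relation.ReflTransGen.refl
  all_goals assumption

theorem stmt17 :
    (∀ (x : Fin 2 → Bool) (i : Fin 2), reduced hhat x i = h17 x i) ∧
    IsAttractor hhat {y | y = fun _ => false} ∧
    (∀ A, IsAttractor hhat A → A = {y | y = fun _ => false}) ∧
    (∃ A B : Set (Fin 2 → Bool), A ≠ B ∧ IsAttractor h17 A ∧ IsAttractor h17 B ∧
      ∀ C, IsAttractor h17 C → C = A ∨ C = B) := by
  have hsetz : ({y | y = fun _ => false} : Set (Fin 3 → Bool)) = {fun _ => false} := by
    ext y; simp [Set.mem_singleton_iff]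
  have hfix3 : hhat (fun _ => false) = fun _ => false := by decide
  refine ⟨by decide, ?_, ?_, ?_⟩
  · rw [hsetz]; exact singleton_attractor hfix3
  · -- uniqueness of hhat attractor
    intro A hA
    obtain ⟨⟨x, hx⟩, htrap, hmin⟩ := hA
    have hz : (fun _ => false : Fin 3 → Bool) ∈ A := trap_closed htrap hx (reach3 x)
    rw [hsetz]
    exact (hmin {fun _ => false} (Set.singleton_subset_iff.mpr hz) ⟨_, rfl⟩
      (singleton_attractor hfix3).2.1).symm
  · -- two attractors of h17
    set s00 : Fin 2 → Bool := ![false, false] with hs00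
    set s01 : Fin 2 → Bool := ![false, true] with hs01
    set s10 : Fin 2 → Bool := ![true, false] with hs10
    set s11 : Fin 2 → Bool := ![true, true] with hs11
    set B : Set (Fin 2 → Bool) := {s01, s10, s11} with hB
    have hfix2 : h17 s00 = s00 := by decide
    -- edges
    have e01 : step h17 s01 s11 := by decide
    have e10 : step h17 s10 s11 := by decide
    have e11a : step h17 s11 s01 := by decide
    have e11b : step h17 s11 s10 := by decide
    -- reach within B
    have rto : ∀ x ∈ B, reaches h17 x s11 := by
      intro x hx
      rcases hx with h | h | h <;> subst h
      · exact Relation.ReflTransGen.single e01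
      · exact Relation.ReflTransGen.single e10
      · exact Relation.ReflTransGen.refl
    have rfrom : ∀ y ∈ B, reaches h17 s11 y := by
      intro y hy
      rcases hy with h | h | h <;> subst h
      · exact Relation.ReflTransGen.single e11a
      · exact Relation.ReflTransGen.single e11b
      · exact Relation.ReflTransGen.refl
    have rBB : ∀ x ∈ B, ∀ y ∈ B, reaches h17 x y :=
      fun x hx y hy => (rto x hx).trans (rfrom y hy)
    -- B is a trap
    have htrapB : IsTrap h17 B := by
      intro x hx y hy
      rcases hx with h | h | h <;> subst h <;>
        obtain ⟨i, hi, hy'⟩ := hy <;> fin_cases i <;>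
        first
          | exact absurd hi (by decide)
          | (subst hy'; first
              | exact Or.inl (by decide)
              | exact Or.inr (Or.inl (by decide))
              | exact Or.inr (Or.inr (by decide)))
    have hattrB : IsAttractor h17 B := by
      refine ⟨⟨s11, Or.inr (Or.inr rfl)⟩, htrapB, ?_⟩
      intro B' hsub ⟨x, hx⟩ htrap'
      apply Set.Subset.antisymm hsub
      intro y hy
      exact trap_closed htrap' hx (rBB x (hsub hx) y hy)
    refine ⟨{s00}, B, ?_, singleton_attractor hfix2, hattrB, ?_⟩
    · intro h
      have : s00 ∈ B := h ▸ rfl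
      rcases this with h' | h' | h' <;> exact absurd h' (by decide)
    · intro C hC
      obtain ⟨⟨x, hx⟩, htrapC, hminC⟩ := hC
      have hx4 : x = s00 ∨ x ∈ B := by
        rw [eta2 x]
        rcases Bool.dichotomy (x 0) with h0 | h0 <;> rcases Bool.dichotomy (x 1) with h1 | h1 <;>
          rw [h0, h1]
        · exact Or.inl rfl
        · exact Or.inr (Or.inl rfl)
        · exact Or.inr (Or.inr (Or.inl rfl))
        · exact Or.inr (Or.inr (Or.inr rfl))
      rcases hx4 with h | h
      · subst h
        exact Or.inl (hminC (Set.singleton s00) (Set.singleton_subset_iff.mpr hx) ⟨_, rfl⟩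
          (singleton_attractor hfix2).2.1).symm
      · right
        have hBC : B ⊆ C := fun y hy => trap_closed htrapC hx (rBB x h y hy)
        exact (hminC B hBC ⟨s11, Or.inr (Or.inr rfl)⟩ htrapB).symm
end
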